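/- Let Ω ⊆ ℝ³ be an open set, let C be a twice continuously differentiable positive-definite symmetric 3×3 matrix field on Ω with Christoffel symbols Γ, and let F : Ω → ℝ^{3×3} be a continuously differentiable solution of the Pfaffian system F_{iα,β} = Σ_ρ Γ^ρ_{αβ} F_{iρ} on Ω. Then for any two C¹ loops γ₀, γ₁ that are freely homotopic in Ω: ∫₀¹ F(γ₀(t)) γ₀'(t) dt = ∫₀¹ F(γ₁(t)) γ₁'(t) dt; i.e., the loop integral of F depends only on the free homotopy class of the loop. -/

import Mathlib

noncomputable section

open Matrix

/-- Points of 3-d Euclidean space, as triples of reals. -/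
abbrev E3 : Type := Fin 3 → ℝ

/-- Partial derivative `∂_j f` of a scalar field `f` at `x`. -/
noncomputable def pd (j : Fin 3) (f : E3 → ℝ) (x : E3) : ℝ :=
  fderiv ℝ f x (Pi.single j 1)

/-- The Christoffel symbols `Γ^γ_{αβ}` of a positive-definite symmetric matrix field `C`:
`Γ^γ_{αβ} = ½ Σ_μ (C⁻¹)^{γμ}(C_{αμ,β} + C_{βμ,α} − C_{αβ,μ})`. -/
noncomputable def christoffel (C : E3 → Matrix (Fin 3) (Fin 3) ℝ)
    (γ α β : Fin 3) (x : E3) : ℝ :=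
  (1 / 2) * ∑ μ, (C x)⁻¹ γ μ *
    (pd β (fun y => C y α μ) x + pd α (fun y => C y β μ) x - pd μ (fun y => C y α β) x)

/-- `F` solves the Pfaffian system associated with `C` on `Ω`:
`F_{iα,β} = Σ_ρ Γ^ρ_{αβ} F_{iρ}` on `Ω`. -/
def SolvesPfaffian (C F : E3 → Matrix (Fin 3) (Fin 3) ℝ) (Ω : Set E3) : Prop :=
  ∀ x ∈ Ω, ∀ i α β : Fin 3,
    pd β (fun y => F y i α) x = ∑ ρ, christoffel C ρ α β x * F x i ρ

/-- A C¹ loop in `Ω`: a continuously differentiable map `γ : [0,1] → Ω` with `γ 0 = γ 1`. -/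
def IsC1LoopIn (γ : ℝ → E3) (Ω : Set E3) : Prop :=
  ContDiffOn ℝ 1 γ (Set.Icc 0 1) ∧ (∀ t ∈ Set.Icc (0:ℝ) 1, γ t ∈ Ω) ∧ γ 0 = γ 1

/-- Free homotopy of loops within `Ω`. -/
def FreelyHomotopicIn (γ₀ γ₁ : ℝ → E3) (Ω : Set E3) : Prop :=
  ∃ Hom : ℝ × ℝ → E3,
    ContinuousOn Hom (Set.Icc 0 1 ×ˢ Set.Icc 0 1) ∧
    (∀ p ∈ (Set.Icc (0:ℝ) 1 ×ˢ Set.Icc (0:ℝ) 1), Hom p ∈ Ω) ∧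
    (∀ t ∈ Set.Icc (0:ℝ) 1, Hom (0, t) = γ₀ t) ∧
    (∀ t ∈ Set.Icc (0:ℝ) 1, Hom (1, t) = γ₁ t) ∧
    (∀ s ∈ Set.Icc (0:ℝ) 1, Hom (s, 0) = Hom (s, 1))

namespace Wein
open MeasureTheory intervalIntegral Set Metric Interval
structure Closed1 (Ω : Set E3) (V : E3 → E3) : Prop where
  reg : ∀ k, ContDiffOn ℝ 1 (fun y => V y k) Ω
  symm : ∀ x ∈ Ω, ∀ j k : Fin 3,
    fderiv ℝ (fun y => V y k) x (Pi.single j 1) = fderiv ℝ (fun y => V y j) x (Pi.single k 1)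
variable {Ω : Set E3} {V : E3 → E3}
theorem Closed1.contOn (h : Closed1 Ω V) : ContinuousOn V Ω := by
  apply continuousOn_pi.2 fun k => (h.reg k).continuousOn
theorem Closed1.hasFDerivAt (h : Closed1 Ω V) (hΩ : IsOpen Ω) {x : E3} (hx : x ∈ Ω) (k : Fin 3) :
    HasFDerivAt (fun y => V y k) (fderiv ℝ (fun y => V y k) x) x :=
  (((h.reg k).contDiffAt (hΩ.mem_nhds hx)).differentiableAt one_ne_zero).hasFDerivAt
theorem Closed1.contFDeriv (h : Closed1 Ω V) (hΩ : IsOpen Ω) (k : Fin 3) :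
    ContinuousOn (fun x => fderiv ℝ (fun y => V y k) x) Ω :=
  (h.reg k).continuousOn_fderiv_of_isOpen hΩ le_rfl
theorem clm_apply_eq_sum (L : E3 →L[ℝ] ℝ) (u : E3) :
    L u = ∑ j, u j * L (Pi.single j 1) := by
  have hu : u = ∑ j, u j • (Pi.single j (1:ℝ) : E3) := by
    ext k; simp [Pi.single_apply, Finset.sum_apply]
  conv_lhs => rw [hu]
  rw [map_sum]; simp [mul_comm]
theorem Closed1.pairing (h : Closed1 Ω V) {x : E3} (hx : x ∈ Ω) (u w : E3) :
    ∑ k, fderiv ℝ (fun y => V y k) x u * w k = ∑ k, fderiv ℝ (fun y => V y k) x w * u k := by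
  have e : ∀ k, fderiv ℝ (fun y => V y k) x u * w k
      = ∑ j, u j * (fderiv ℝ (fun y => V y k) x (Pi.single j 1) * w k) := by
    intro k; rw [clm_apply_eq_sum]; rw [Finset.sum_mul]; simp [mul_assoc]
  have e' : ∀ k, fderiv ℝ (fun y => V y k) x w * u k
      = ∑ j, w j * (fderiv ℝ (fun y => V y k) x (Pi.single j 1) * u k) := by
    intro k; rw [clm_apply_eq_sum]; rw [Finset.sum_mul]; simp [mul_assoc]
  simp only [e, e']
  rw [Finset.sum_comm]
  apply Finset.sum_congr rfl; intro k _
  apply Finset.sum_congr rfl; intro j _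
  rw [h.symm x hx k j]; ring
def seg (V : E3 → E3) (a b : E3) : ℝ :=
  ∫ t in (0:ℝ)..1, ∑ k, V (a + t • (b - a)) k * (b - a) k
theorem seg_self (a : E3) : seg V a a = 0 := by simp [seg]

set_option maxHeartbeats 1000000 in
theorem hasDerivAt_seg_line (h : Closed1 Ω V) (hΩ : IsOpen Ω) {U : Set E3} (hUo : IsOpen U)
    (hUc : Convex ℝ U) (hUΩ : U ⊆ Ω) {a c d : E3} (ha : a ∈ U)
    {v₀ : ℝ} (hv : c + v₀ • (d - c) ∈ U) :
    HasDerivAt (fun v => seg V a (c + v • (d - c)))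
      (∑ k, V (c + v₀ • (d - c)) k * (d - c) k) v₀ := by
  classical
  set p : ℝ → E3 := fun v => c + v • (d - c) with hp
  have hpcont : Continuous p := by fun_prop
  -- find ε with closedBall v₀ ε ⊆ p ⁻¹' U
  have hvopen : IsOpen (p ⁻¹' U) := hUo.preimage hpcont
  obtain ⟨ε', hε', hball⟩ := Metric.isOpen_iff.1 hvopen v₀ hv
  set ε := ε' / 2 with hεdef
  have hε : 0 < ε := by positivity
  have hcb : closedBall v₀ ε ⊆ p ⁻¹' U := fun x hx => hball (by
    have : dist x v₀ ≤ ε := hx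
    exact mem_ball.2 (lt_of_le_of_lt this (by simp [hεdef]; linarith)))
  set q : ℝ → ℝ → E3 := fun x t => a + t • (p x - a) with hqdef
  have hq_mem : ∀ x ∈ closedBall v₀ ε, ∀ t ∈ Icc (0:ℝ) 1, q x t ∈ U := by
    intro x hx t ht
    exact hUc.add_smul_sub_mem ha (hcb hx) ht
  set Fn : ℝ → ℝ → ℝ := fun x t => ∑ k, V (q x t) k * (p x - a) k with hFdef
  set Fn' : ℝ → ℝ → ℝ := fun x t =>
    ∑ k, (fderiv ℝ (fun y => V y k) (q x t) (t • (d - c)) * (p x - a) k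
      + V (q x t) k * (d - c) k) with hF'def
  -- joint continuity helpers
  set S : Set (ℝ × ℝ) := closedBall v₀ ε ×ˢ Icc (0:ℝ) 1 with hSdef
  have hScomp : IsCompact S := (isCompact_closedBall _ _).prod isCompact_Icc
  have hQcont : Continuous (fun z : ℝ × ℝ => q z.1 z.2) := by
    simp only [hqdef, hp]; fun_prop
  have hQmem : ∀ z ∈ S, q z.1 z.2 ∈ U := fun z hz => hq_mem z.1 hz.1 z.2 hz.2
  have hVq : ∀ k, ContinuousOn (fun z : ℝ × ℝ => V (q z.1 z.2) k) S := by
    intro k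
    exact ((h.reg k).continuousOn.comp hQcont.continuousOn (fun z hz => hUΩ (hQmem z hz)))
  have hDq : ∀ k, ContinuousOn
      (fun z : ℝ × ℝ => fderiv ℝ (fun y => V y k) (q z.1 z.2) (z.2 • (d - c))) S := by
    intro k
    apply ContinuousOn.clm_apply
    · exact (h.contFDeriv hΩ k).comp hQcont.continuousOn (fun z hz => hUΩ (hQmem z hz))
    · fun_prop
  have hF'cont : ContinuousOn (fun z : ℝ × ℝ => Fn' z.1 z.2) S := by
    apply continuousOn_finset_sum
    intro k _
    exact ((hDq k).mul (by fun_prop)).add ((hVq k).mul continuousOn_const)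
  obtain ⟨M, hM⟩ := hScomp.exists_bound_of_continuousOn hF'cont
  -- slice continuity of F
  have hFcont : ∀ x ∈ closedBall v₀ ε, ContinuousOn (fun t => Fn x t) (Icc (0:ℝ) 1) := by
    intro x hx
    apply continuousOn_finset_sum
    intro k _
    apply ContinuousOn.mul _ continuousOn_const
    have : ContinuousOn (fun t : ℝ => q x t) (Icc 0 1) := by
      simp only [hqdef]; fun_prop
    exact (h.reg k).continuousOn.comp this (fun t ht => hUΩ (hq_mem x hx t ht))
  have hmemI : ∀ t ∈ Ι (0:ℝ) 1, t ∈ Icc (0:ℝ) 1 := fun t ht =>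
    Ioc_subset_Icc_self (by rwa [uIoc_of_le (by norm_num : (0:ℝ) ≤ 1)] at ht)
  -- the derivative facts
  have hdiff : ∀ t ∈ Ι (0:ℝ) 1, ∀ x ∈ ball v₀ ε,
      HasDerivAt (fun x => Fn x t) (Fn' x t) x := by
    intro t ht x hx
    have htI := hmemI t ht
    have hxC : x ∈ closedBall v₀ ε := ball_subset_closedBall hx
    apply HasDerivAt.fun_sum
    intro k _
    have hq_deriv : HasDerivAt (fun x => q x t) (t • (d - c)) x := by
      have h1 : (fun x : ℝ => q x t) = fun x => (a + t • (c - a)) + x • (t • (d - c)) := by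
        funext x
        simp only [hqdef, hp]
        module
      have h2 : HasDerivAt (fun x : ℝ => (a + t • (c - a)) + x • (t • (d - c)))
          (t • (d - c)) x := by
        simpa using ((hasDerivAt_id x).smul_const (t • (d - c))).const_add (a + t • (c - a))
      rw [h1]; exact h2
    have hVk : HasDerivAt (fun x => V (q x t) k)
        (fderiv ℝ (fun y => V y k) (q x t) (t • (d - c))) x := by
      have := (h.hasFDerivAt hΩ (hUΩ (hq_mem x hxC t htI)) k).comp_hasDerivAt x hq_deriv; exact this
    have hpk : HasDerivAt (fun x => (p x - a) k) ((d - c) k) x := by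
      have h1 : (fun x : ℝ => (p x - a) k) = fun x => (c - a) k + x * (d - c) k := by
        funext x; simp only [hp, Pi.sub_apply, Pi.add_apply, Pi.smul_apply, smul_eq_mul]; ring
      have h2 : HasDerivAt (fun x : ℝ => (c - a) k + x * (d - c) k) ((d - c) k) x := by
        simpa using ((hasDerivAt_id x).mul_const ((d - c) k)).const_add ((c - a) k)
      rw [h1]; exact h2
    exact hVk.mul hpk
  -- apply dominated differentiation under the integral
  have hF_meas : ∀ᶠ x in nhds v₀, AEStronglyMeasurable (Fn x) (volume.restrict (Ι (0:ℝ) 1)) := by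
    filter_upwards [ball_mem_nhds v₀ hε] with x hx
    exact ((hFcont x (ball_subset_closedBall hx)).mono hmemI).aestronglyMeasurable
      measurableSet_uIoc
  have hF_int : IntervalIntegrable (Fn v₀) volume 0 1 := by
    have hc := hFcont v₀ (mem_closedBall_self hε.le)
    rw [show Icc (0:ℝ) 1 = uIcc (0:ℝ) 1 from (uIcc_of_le zero_le_one).symm] at hc
    exact hc.intervalIntegrable
  have hF'slice : ContinuousOn (fun t => Fn' v₀ t) (Icc (0:ℝ) 1) := by
    have hqc : ContinuousOn (fun t : ℝ => q v₀ t) (Icc (0:ℝ) 1) := by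
      simp only [hqdef]; fun_prop
    have hmapsto : ∀ t ∈ Icc (0:ℝ) 1, q v₀ t ∈ Ω := fun t ht =>
      hUΩ (hq_mem v₀ (mem_closedBall_self hε.le) t ht)
    apply continuousOn_finset_sum
    intro k _
    apply ContinuousOn.add
    · apply ContinuousOn.mul _ continuousOn_const
      apply ContinuousOn.clm_apply
      · exact (h.contFDeriv hΩ k).comp hqc hmapsto
      · fun_prop
    · exact ContinuousOn.mul ((h.reg k).continuousOn.comp hqc hmapsto) continuousOn_const
  have hF'_meas : AEStronglyMeasurable (Fn' v₀) (volume.restrict (Ι (0:ℝ) 1)) :=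
    (hF'slice.mono hmemI).aestronglyMeasurable measurableSet_uIoc
  have h_bound : ∀ᵐ t ∂(volume : Measure ℝ), t ∈ Ι (0:ℝ) 1 →
      ∀ x ∈ ball v₀ ε, ‖Fn' x t‖ ≤ M := by
    apply MeasureTheory.ae_of_all
    intro t ht x hx
    exact hM (x, t) ⟨ball_subset_closedBall hx, hmemI t ht⟩
  have key := intervalIntegral.hasDerivAt_integral_of_dominated_loc_of_deriv_le (ball_mem_nhds v₀ hε) hF_meas
    hF_int hF'_meas h_bound (_root_.intervalIntegrable_const (c := M)) (MeasureTheory.ae_of_all _ hdiff)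
  obtain ⟨hF'int, hder⟩ := key
  -- compute the value of the derivative by FTC in t
  set w : E3 := p v₀ - a with hwdef
  set φf : ℝ → ℝ := fun t => t * ∑ k, V (q v₀ t) k * (d - c) k with hφdef
  have hv₀cb : v₀ ∈ closedBall v₀ ε := mem_closedBall_self hε.le
  have hφd : ∀ t ∈ uIcc (0:ℝ) 1, HasDerivAt φf (Fn' v₀ t) t := by
    intro t ht
    rw [uIcc_of_le zero_le_one] at ht
    have hqΩ : q v₀ t ∈ Ω := hUΩ (hq_mem v₀ hv₀cb t ht)
    have hqv : HasDerivAt (fun t => q v₀ t) w t := by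
      have he : (fun t : ℝ => q v₀ t) = fun t => a + t • w := rfl
      rw [he]; simpa using ((hasDerivAt_id t).smul_const w).const_add a
    have hsum : HasDerivAt (fun t => ∑ k, V (q v₀ t) k * (d - c) k)
        (∑ k, fderiv ℝ (fun y => V y k) (q v₀ t) w * (d - c) k) t := by
      apply HasDerivAt.fun_sum
      intro k _
      exact ((h.hasFDerivAt hΩ hqΩ k).comp_hasDerivAt t hqv).mul_const _
    have hmul : HasDerivAt (fun y => y * ∑ k, V (q v₀ y) k * (d - c) k)
        (1 * ∑ k, V (q v₀ t) k * (d - c) k + t * ∑ k, fderiv ℝ (fun y => V y k) (q v₀ t) w * (d - c) k) t :=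
      (hasDerivAt_id t).fun_mul hsum
    convert hmul using 1
    have hpair := h.pairing hqΩ (d - c) w
    simp only [hF'def, id_eq, one_mul]
    rw [Finset.sum_add_distrib]
    have e1 : ∑ k, fderiv ℝ (fun y => V y k) (q v₀ t) (t • (d - c)) * w k
        = t * ∑ k, fderiv ℝ (fun y => V y k) (q v₀ t) (d - c) * w k := by
      rw [Finset.mul_sum]
      apply Finset.sum_congr rfl
      intro k _
      simp only [ContinuousLinearMap.map_smul, smul_eq_mul, mul_assoc]
    rw [e1, hpair]
    ring
  have hftc := intervalIntegral.integral_eq_sub_of_hasDerivAt hφd hF'int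
  have hval : (∫ t in (0:ℝ)..1, Fn' v₀ t) = ∑ k, V (c + v₀ • (d - c)) k * (d - c) k := by
    rw [hftc]
    have hq1 : q v₀ 1 = c + v₀ • (d - c) := by
      show a + (1:ℝ) • (p v₀ - a) = _
      rw [one_smul]
      simp [hp]
    simp only [hφdef, hq1, one_mul, zero_mul, sub_zero]
  rw [← hval]
  exact hder

theorem seg_add (h : Closed1 Ω V) (hΩ : IsOpen Ω) {U : Set E3} (hUo : IsOpen U)
    (hUc : Convex ℝ U) (hUΩ : U ⊆ Ω) {a c d : E3} (ha : a ∈ U) (hc : c ∈ U) (hd : d ∈ U) :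
    seg V a c + seg V c d = seg V a d := by
  have hder : ∀ v ∈ uIcc (0:ℝ) 1, HasDerivAt (fun v => seg V a (c + v • (d - c)))
      (∑ k, V (c + v • (d - c)) k * (d - c) k) v := by
    intro v hv
    rw [uIcc_of_le zero_le_one] at hv
    exact hasDerivAt_seg_line h hΩ hUo hUc hUΩ ha (hUc.add_smul_sub_mem hc hd hv)
  have hint : IntervalIntegrable (fun v => ∑ k, V (c + v • (d - c)) k * (d - c) k)
      volume 0 1 := by
    apply ContinuousOn.intervalIntegrable
    rw [uIcc_of_le zero_le_one]
    apply continuousOn_finset_sum; intro k _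
    apply ContinuousOn.mul _ continuousOn_const
    have hpath : ContinuousOn (fun v : ℝ => c + v • (d - c)) (Icc 0 1) := by fun_prop
    exact (h.reg k).continuousOn.comp hpath (fun v hv => hUΩ (hUc.add_smul_sub_mem hc hd hv))
  have hftc := intervalIntegral.integral_eq_sub_of_hasDerivAt hder hint
  have e1 : (∫ v in (0:ℝ)..1, ∑ k, V (c + v • (d - c)) k * (d - c) k) = seg V c d := rfl
  have e2 : c + (1:ℝ) • (d - c) = d := by module
  have e3 : c + (0:ℝ) • (d - c) = c := by module
  rw [e1, e2, e3] at hftc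
  linarith

theorem seg_eq_sub (h : Closed1 Ω V) (hΩ : IsOpen Ω) {U : Set E3} (hUo : IsOpen U)
    (hUc : Convex ℝ U) (hUΩ : U ⊆ Ω) {a x y : E3} (ha : a ∈ U) (hx : x ∈ U) (hy : y ∈ U) :
    seg V x y = seg V a y - seg V a x := by
  have := seg_add h hΩ hUo hUc hUΩ ha hx hy
  linarith

/-- the linear functional `u ↦ ∑ k, v k * u k` -/
def dotCLM (v : E3) : E3 →L[ℝ] ℝ := ∑ k, v k • ContinuousLinearMap.proj k

theorem dotCLM_apply (v u : E3) : dotCLM v u = ∑ k, v k * u k := by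
  simp [dotCLM, ContinuousLinearMap.sum_apply, smul_eq_mul]

theorem hasFDerivAt_seg (h : Closed1 Ω V) (hΩ : IsOpen Ω) {U : Set E3} (hUo : IsOpen U)
    (hUc : Convex ℝ U) (hUΩ : U ⊆ Ω) {a : E3} (ha : a ∈ U) {z : E3} (hz : z ∈ U) :
    HasFDerivAt (fun y => seg V a y) (dotCLM (V z)) z := by
  rw [hasFDerivAt_iff_isLittleO_nhds_zero, Asymptotics.isLittleO_iff]
  intro εp hεp
  -- a good neighborhood of z
  have hVz : ∀ k, ContinuousAt (fun y => V y k) z := fun k =>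
    ((h.reg k).continuousOn).continuousAt (hΩ.mem_nhds (hUΩ hz))
  have hall : ∀ᶠ y in nhds z, ∀ k, dist (V y k) (V z k) < εp / 3 := by
    rw [Filter.eventually_all]
    intro k
    exact Metric.tendsto_nhds.mp (hVz k).tendsto (εp/3) (by positivity)
  have hset : {y | y ∈ U ∧ ∀ k, dist (V y k) (V z k) < εp / 3} ∈ nhds z := by
    apply Filter.inter_mem (hUo.mem_nhds hz) hall
  obtain ⟨δ, hδ, hsub⟩ := Metric.mem_nhds_iff.1 hset
  have hev : ∀ᶠ w in nhds (0 : E3), ‖w‖ < δ := by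
    have := Metric.ball_mem_nhds (0 : E3) hδ
    filter_upwards [this] with w hw
    simpa [dist_eq_norm] using hw
  filter_upwards [hev] with w hw
  -- points on the segment z .. z+w are in the good set
  have hmem : ∀ t : ℝ, t ∈ Icc (0:ℝ) 1 → (z + t • w) ∈ {y | y ∈ U ∧ ∀ k, dist (V y k) (V z k) < εp / 3} := by
    intro t ht
    apply hsub
    rw [Metric.mem_ball, dist_eq_norm]
    have : ‖(z + t • w) - z‖ = ‖t • w‖ := by rw [add_sub_cancel_left]
    rw [this, norm_smul]
    calc ‖t‖ * ‖w‖ ≤ 1 * ‖w‖ := by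
          apply mul_le_mul_of_nonneg_right _ (norm_nonneg w)
          rw [Real.norm_eq_abs, abs_of_nonneg ht.1]; exact ht.2
      _ = ‖w‖ := one_mul _
      _ < δ := hw
  have hzw : z + w ∈ U := by
    have := hmem 1 ⟨zero_le_one, le_refl 1⟩
    rw [one_smul] at this
    exact this.1
  -- rewrite the difference as a segment integral
  have hsegeq : seg V a (z + w) - seg V a z = seg V z (z + w) :=
    (seg_eq_sub h hΩ hUo hUc hUΩ ha hz hzw).symm
  have hseg2 : seg V z (z + w) = ∫ t in (0:ℝ)..1, ∑ k, V (z + t • w) k * w k := by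
    simp [seg, add_sub_cancel_left]
  have hintf : IntervalIntegrable (fun t => ∑ k, V (z + t • w) k * w k) volume 0 1 := by
    apply ContinuousOn.intervalIntegrable
    rw [uIcc_of_le zero_le_one]
    apply continuousOn_finset_sum; intro k _
    apply ContinuousOn.mul _ continuousOn_const
    have hpath : ContinuousOn (fun t : ℝ => z + t • w) (Icc 0 1) := by fun_prop
    exact (h.reg k).continuousOn.comp hpath (fun t ht => hUΩ (hmem t ht).1)
  have hconst : (dotCLM (V z)) w = ∫ t in (0:ℝ)..1, ∑ k, V z k * w k := by
    rw [dotCLM_apply]; simp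
  rw [hsegeq, hseg2, hconst, ← intervalIntegral.integral_sub hintf (by
    apply ContinuousOn.intervalIntegrable; exact continuousOn_const)]
  have hbd : ∀ t ∈ Ι (0:ℝ) 1, ‖(∑ k, V (z + t • w) k * w k) - ∑ k, V z k * w k‖ ≤ εp * ‖w‖ := by
    intro t ht
    have htI : t ∈ Icc (0:ℝ) 1 := Ioc_subset_Icc_self (by
      rwa [uIoc_of_le zero_le_one] at ht)
    have hm := (hmem t htI).2
    have step : ∀ k, ‖(V (z + t • w) k - V z k) * w k‖ ≤ (εp/3) * ‖w‖ := by
      intro k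
      rw [norm_mul]
      apply mul_le_mul
      · rw [Real.norm_eq_abs, ← Real.dist_eq]; exact (hm k).le
      · rw [Real.norm_eq_abs, ← Real.norm_eq_abs]; exact norm_le_pi_norm w k
      · exact norm_nonneg _
      · positivity
    calc ‖∑ k, V (z + t • w) k * w k - ∑ k, V z k * w k‖
        = ‖∑ k, (V (z + t • w) k - V z k) * w k‖ := by
          rw [← Finset.sum_sub_distrib]; congr 1; apply Finset.sum_congr rfl; intros; ring
      _ ≤ ∑ k, ‖(V (z + t • w) k - V z k) * w k‖ := norm_sum_le _ _
      _ ≤ ∑ _k : Fin 3, (εp/3) * ‖w‖ := Finset.sum_le_sum (fun k _ => step k)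
      _ = εp * ‖w‖ := by simp [Finset.sum_const]; ring
  calc ‖∫ t in (0:ℝ)..1, ((∑ k, V (z + t • w) k * w k) - ∑ k, V z k * w k)‖
      ≤ εp * ‖w‖ * |(1:ℝ) - 0| := intervalIntegral.norm_integral_le_of_norm_le_const hbd
    _ = εp * ‖w‖ := by simp

theorem seg_continuousOn (h : Closed1 Ω V) (hΩ : IsOpen Ω) {U : Set E3} (hUo : IsOpen U)
    (hUc : Convex ℝ U) (hUΩ : U ⊆ Ω) {a : E3} (ha : a ∈ U) :
    ContinuousOn (fun y => seg V a y) U := fun z hz =>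
  (hasFDerivAt_seg h hΩ hUo hUc hUΩ ha hz).continuousAt.continuousWithinAt

theorem integral_arc (h : Closed1 Ω V) (hΩ : IsOpen Ω) {U : Set E3} (hUo : IsOpen U)
    (hUc : Convex ℝ U) (hUΩ : U ⊆ Ω) {γ : ℝ → E3}
    (hγ : ContDiffOn ℝ 1 γ (Icc 0 1)) {u v : ℝ}
    (h0 : 0 ≤ u) (huv : u ≤ v) (h1 : v ≤ 1)
    (harc : ∀ t ∈ Icc u v, γ t ∈ U) :
    (∫ t in u..v, ∑ k, V (γ t) k * derivWithin γ (Icc 0 1) t k) = seg V (γ u) (γ v) := by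
  have hsubI : Icc u v ⊆ Icc (0:ℝ) 1 := Icc_subset_Icc h0 h1
  have hgu : γ u ∈ U := harc u ⟨le_refl u, huv⟩
  have hgv : γ v ∈ U := harc v ⟨huv, le_refl v⟩
  set φ : ℝ → ℝ := fun t => ∑ k, V (γ t) k * derivWithin γ (Icc 0 1) t k with hφdef
  have hφcont : ContinuousOn φ (Icc u v) := by
    have hdw : ContinuousOn (derivWithin γ (Icc (0:ℝ) 1)) (Icc (0:ℝ) 1) :=
      hγ.continuousOn_derivWithin (uniqueDiffOn_Icc zero_lt_one) le_rfl
    apply continuousOn_finset_sum; intro k _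
    apply ContinuousOn.mul
    · exact (h.reg k).continuousOn.comp (hγ.continuousOn.mono hsubI)
        (fun t ht => hUΩ (harc t ht))
    · exact (continuous_apply k).comp_continuousOn (hdw.mono hsubI)
  have hgcont : ContinuousOn ((fun y => seg V (γ u) y) ∘ γ) (Icc u v) :=
    (seg_continuousOn h hΩ hUo hUc hUΩ hgu).comp (hγ.continuousOn.mono hsubI) harc
  have hgderiv : ∀ t ∈ Ioo u v, HasDerivWithinAt ((fun y => seg V (γ u) y) ∘ γ) (φ t) (Ioi t) t := by
    intro t ht
    have ht01 : t ∈ Ioo (0:ℝ) 1 := ⟨lt_of_le_of_lt h0 ht.1, lt_of_lt_of_le ht.2 h1⟩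
    have hIccnhds : Icc (0:ℝ) 1 ∈ nhds t := Icc_mem_nhds ht01.1 ht01.2
    have hγd : HasDerivAt γ (derivWithin γ (Icc (0:ℝ) 1) t) t := by
      rw [derivWithin_of_mem_nhds hIccnhds]
      exact ((hγ.contDiffAt hIccnhds).differentiableAt one_ne_zero).hasDerivAt
    have hfd := hasFDerivAt_seg h hΩ hUo hUc hUΩ hgu (harc t (Ioo_subset_Icc_self ht))
    have hcomp := hfd.comp_hasDerivAt t hγd
    rw [dotCLM_apply] at hcomp
    exact hcomp.hasDerivWithinAt
  have hφint : IntervalIntegrable φ volume u v := by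
    apply ContinuousOn.intervalIntegrable
    rwa [uIcc_of_le huv]
  have := intervalIntegral.integral_eq_sub_of_hasDeriv_right_of_le huv hgcont hgderiv hφint
  rw [this]
  show seg V (γ u) (γ v) - seg V (γ u) (γ u) = _
  rw [seg_self]
  ring

theorem loop_poly (h : Closed1 Ω V) (hΩ : IsOpen Ω) {γ : ℝ → E3}
    (hγ : ContDiffOn ℝ 1 γ (Icc 0 1)) (hγΩ : ∀ t ∈ Icc (0:ℝ) 1, γ t ∈ Ω) {N : ℕ} (hN : 0 < N)
    (hU : ∀ j, j < N → ∃ U : Set E3, IsOpen U ∧ Convex ℝ U ∧ U ⊆ Ω ∧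
      ∀ t ∈ Icc ((j:ℝ)/N) (((j:ℝ)+1)/N), γ t ∈ U) :
    (∫ t in (0:ℝ)..1, ∑ k, V (γ t) k * derivWithin γ (Icc 0 1) t k)
      = ∑ j ∈ Finset.range N, seg V (γ ((j:ℝ)/N)) (γ (((j:ℝ)+1)/N)) := by
  have hNR : (0:ℝ) < N := by exact_mod_cast hN
  set φ : ℝ → ℝ := fun t => ∑ k, V (γ t) k * derivWithin γ (Icc 0 1) t k with hφdef
  set a : ℕ → ℝ := fun j => (j:ℝ)/N with hadef
  have hmono : ∀ j : ℕ, a j ≤ a (j+1) := by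
    intro j
    exact (div_le_div_iff_of_pos_right hNR).2 (by exact_mod_cast Nat.le_succ j)
  have hbounds : ∀ j : ℕ, j ≤ N → a j ∈ Icc (0:ℝ) 1 := by
    intro j hj
    constructor
    · positivity
    · rw [div_le_one hNR]; exact_mod_cast hj
  have hIccsub : ∀ j : ℕ, j < N → Icc (a j) (a (j+1)) ⊆ Icc (0:ℝ) 1 := by
    intro j hj
    exact Icc_subset_Icc (hbounds j hj.le).1 (hbounds (j+1) hj).2
  have hseg : ∀ j, j < N → (∫ t in (a j)..(a (j+1)), φ t) = seg V (γ (a j)) (γ (a (j+1))) := by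
    intro j hj
    obtain ⟨U, hUo, hUc, hUΩ, harc⟩ := hU j hj
    have hcast : a (j+1) = ((j:ℝ)+1)/N := by simp only [hadef]; push_cast; ring
    have harc' : ∀ t ∈ Icc (a j) (a (j+1)), γ t ∈ U := by
      intro t ht
      apply harc
      rw [← hcast]; exact ht
    exact integral_arc h hΩ hUo hUc hUΩ hγ (hbounds j hj.le).1 (hmono j) (hbounds (j+1) hj).2 harc'
  have hint : ∀ j, j < N → IntervalIntegrable φ volume (a j) (a (j+1)) := by
    intro j hj
    apply ContinuousOn.intervalIntegrable
    rw [uIcc_of_le (hmono j)]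
    have hdw : ContinuousOn (derivWithin γ (Icc (0:ℝ) 1)) (Icc (0:ℝ) 1) :=
      hγ.continuousOn_derivWithin (uniqueDiffOn_Icc zero_lt_one) le_rfl
    apply continuousOn_finset_sum; intro k _
    apply ContinuousOn.mul
    · exact (h.reg k).continuousOn.comp (hγ.continuousOn.mono (hIccsub j hj))
        (fun t ht => hγΩ t (hIccsub j hj ht))
    · exact (continuous_apply k).comp_continuousOn (hdw.mono (hIccsub j hj))
  have hsum := intervalIntegral.sum_integral_adjacent_intervals hint
  have ha0 : a 0 = 0 := by simp [hadef]
  have haN : a N = 1 := by simp [hadef]; omega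
  rw [ha0, haN] at hsum
  rw [← hsum]
  apply Finset.sum_congr rfl
  intro j hj
  rw [Finset.mem_range] at hj
  rw [hseg j hj, show a (j+1) = ((j:ℝ)+1)/N from by simp only [hadef]; push_cast; ring]

set_option maxHeartbeats 1000000 in
theorem closed1_homotopy_invariant (h : Closed1 Ω V) (hΩ : IsOpen Ω)
    {γ₀ γ₁ : ℝ → E3} (h₀ : _root_.IsC1LoopIn γ₀ Ω) (h₁ : _root_.IsC1LoopIn γ₁ Ω)
    (hhom : _root_.FreelyHomotopicIn γ₀ γ₁ Ω) :
    (∫ t in (0:ℝ)..1, ∑ k, V (γ₀ t) k * derivWithin γ₀ (Icc 0 1) t k) =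
    (∫ t in (0:ℝ)..1, ∑ k, V (γ₁ t) k * derivWithin γ₁ (Icc 0 1) t k) := by
  obtain ⟨H, Hcont, HΩ, H0, H1, Hper⟩ := hhom
  set Q : Set (ℝ×ℝ) := Icc (0:ℝ) 1 ×ˢ Icc (0:ℝ) 1 with hQdef
  have hQcomp : IsCompact Q := isCompact_Icc.prod isCompact_Icc
  have hK : IsCompact (H '' Q) := hQcomp.image_of_continuousOn Hcont
  have hKΩ : H '' Q ⊆ Ω := by rintro y ⟨p, hp, rfl⟩; exact HΩ p hp
  obtain ⟨ε, hε, hth⟩ := hK.exists_thickening_subset_open hΩ hKΩ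
  have hballΩ : ∀ p ∈ Q, Metric.ball (H p) ε ⊆ Ω := fun p hp =>
    (Metric.ball_subset_thickening (Set.mem_image_of_mem H hp) ε).trans hth
  have huc := hQcomp.uniformContinuousOn_of_continuous Hcont
  rw [Metric.uniformContinuousOn_iff] at huc
  obtain ⟨δ, hδ, hδH⟩ := huc (ε/2) (by positivity)
  obtain ⟨n, hn⟩ := exists_nat_one_div_lt hδ
  set N : ℕ := n + 1 with hNdef
  have hN : 0 < N := Nat.succ_pos n
  have hNR : (0:ℝ) < N := by exact_mod_cast hN
  have hNδ : 1/(N:ℝ) < δ := by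
    rw [hNdef]; push_cast; exact hn
  have hfrac : ∀ j : ℕ, j ≤ N → (j:ℝ)/N ∈ Icc (0:ℝ) 1 := by
    intro j hj
    constructor
    · positivity
    · rw [div_le_one hNR]; exact_mod_cast hj
  have hQmem : ∀ m j : ℕ, m ≤ N → j ≤ N → (((m:ℝ)/N, (j:ℝ)/N) : ℝ × ℝ) ∈ Q :=
    fun m j hm hj => ⟨hfrac m hm, hfrac j hj⟩
  have hdist : ∀ p ∈ Q, ∀ p' ∈ Q, dist p p' ≤ 1/(N:ℝ) → dist (H p) (H p') < ε/2 :=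
    fun p hp p' hp' hle => hδH p hp p' hp' (lt_of_le_of_lt hle hNδ)
  have hstepd : ∀ j : ℕ, dist ((j:ℝ)/N) ((((j+1):ℕ):ℝ)/N) ≤ 1/(N:ℝ) := by
    intro j
    have e : (j:ℝ)/N - (((j+1):ℕ):ℝ)/N = -(1/N) := by push_cast; ring
    rw [Real.dist_eq, e, abs_neg, abs_of_pos (by positivity)]
  set P : ℕ → ℕ → E3 := fun m j => H ((m:ℝ)/N, (j:ℝ)/N) with hPdef
  set D : ℕ → ℝ := fun m => ∑ j ∈ Finset.range N, seg V (P m j) (P m (j+1)) with hDdef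
  -- neighbouring rows give the same polygonal sum
  have hrow : ∀ m, m < N → D m = D (m+1) := by
    intro m hm
    have key : ∀ j, j < N →
        seg V (P m j) (P m (j+1)) - seg V (P (m+1) j) (P (m+1) (j+1))
          = seg V (P (m+1) (j+1)) (P m (j+1)) - seg V (P (m+1) j) (P m j) := by
      intro j hj
      set B := Metric.ball (P m j) ε with hBdef
      have hBΩ : B ⊆ Ω := hballΩ _ (hQmem m j hm.le hj.le)
      have hgrid : ∀ m' j' : ℕ, m' ≤ N → j' ≤ N →
          dist ((m:ℝ)/N) ((m':ℝ)/N) ≤ 1/(N:ℝ) → dist ((j:ℝ)/N) ((j':ℝ)/N) ≤ 1/(N:ℝ) →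
          P m' j' ∈ B := by
        intro m' j' hm' hj' hd1 hd2
        have hd : dist (((m:ℝ)/N, (j:ℝ)/N) : ℝ × ℝ) (((m':ℝ)/N, (j':ℝ)/N) : ℝ × ℝ) ≤ 1/(N:ℝ) := by
          rw [Prod.dist_eq]; exact max_le hd1 hd2
        have := hdist _ (hQmem m j hm.le hj.le) _ (hQmem m' j' hm' hj') hd
        rw [hBdef, Metric.mem_ball, hPdef, dist_comm]
        linarith
      have hzero : ∀ m' : ℕ, dist ((m':ℝ)/N) ((m':ℝ)/N) ≤ 1/(N:ℝ) := by
        intro m'; rw [dist_self]; positivity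
      have hA0 : P m j ∈ B := hgrid m j hm.le hj.le (hzero m) (hzero j)
      have hA1 : P m (j+1) ∈ B := hgrid m (j+1) hm.le hj (hzero m) (hstepd j)
      have hB0 : P (m+1) j ∈ B := hgrid (m+1) j hm hj.le (hstepd m) (hzero j)
      have hB1 : P (m+1) (j+1) ∈ B := hgrid (m+1) (j+1) hm hj (hstepd m) (hstepd j)
      have hBo : IsOpen B := Metric.isOpen_ball
      have hBc : Convex ℝ B := convex_ball _ _
      rw [seg_eq_sub h hΩ hBo hBc hBΩ hA0 hA0 hA1,
          seg_eq_sub h hΩ hBo hBc hBΩ hA0 hB0 hB1,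
          seg_eq_sub h hΩ hBo hBc hBΩ hA0 hB1 hA1,
          seg_eq_sub h hΩ hBo hBc hBΩ hA0 hB0 hA0]
      ring
    have htel : D m - D (m+1)
        = ∑ j ∈ Finset.range N,
            (seg V (P (m+1) (j+1)) (P m (j+1)) - seg V (P (m+1) j) (P m j)) := by
      rw [hDdef, ← Finset.sum_sub_distrib]
      apply Finset.sum_congr rfl
      intro j hj
      exact key j (Finset.mem_range.1 hj)
    rw [Finset.sum_range_sub (f := fun j => seg V (P (m+1) j) (P m j))] at htel
    have hperP : ∀ m' : ℕ, m' ≤ N → P m' N = P m' 0 := by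
      intro m' hm'
      show H ((m':ℝ)/N, (N:ℝ)/N) = H ((m':ℝ)/N, ((0:ℕ):ℝ)/N)
      rw [div_self hNR.ne', Nat.cast_zero, zero_div]
      exact (Hper _ (hfrac m' hm')).symm
    rw [hperP m hm.le, hperP (m+1) hm] at htel
    simp only [sub_self] at htel
    linarith
  have hDchain : D 0 = D N := by
    have hAll : ∀ m, m ≤ N → D m = D 0 := by
      intro m
      induction m with
      | zero => intro _; rfl
      | succ m ih =>
          intro hm
          rw [← hrow m (by omega)]
          exact ih (by omega)
    exact (hAll N le_rfl).symm
  -- the ends of the homotopy compute the two loop integrals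
  have hend : ∀ (γ : ℝ → E3) (mrow : ℕ), _root_.IsC1LoopIn γ Ω → mrow ≤ N →
      (∀ t ∈ Icc (0:ℝ) 1, H ((mrow:ℝ)/N, t) = γ t) →
      (∫ t in (0:ℝ)..1, ∑ k, V (γ t) k * derivWithin γ (Icc 0 1) t k) = D mrow := by
    intro γ mrow hloop hmrow hHrow
    have hsrow : ((mrow:ℝ)/N) ∈ Icc (0:ℝ) 1 := hfrac mrow hmrow
    have hU : ∀ j, j < N → ∃ U : Set E3, IsOpen U ∧ Convex ℝ U ∧ U ⊆ Ω ∧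
        ∀ t ∈ Icc ((j:ℝ)/N) (((j:ℝ)+1)/N), γ t ∈ U := by
      intro j hj
      refine ⟨Metric.ball (P mrow j) ε, Metric.isOpen_ball, convex_ball _ _,
        hballΩ _ (hQmem mrow j hmrow hj.le), ?_⟩
      intro t ht
      have hj1 : (((j:ℝ)+1)/N) ≤ 1 := by
        rw [div_le_one hNR]
        have : ((j:ℝ)+1) = (((j+1):ℕ):ℝ) := by push_cast; ring
        rw [this]; exact_mod_cast hj
      have ht01 : t ∈ Icc (0:ℝ) 1 := ⟨le_trans (hfrac j hj.le).1 ht.1, le_trans ht.2 hj1⟩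
      rw [← hHrow t ht01]
      have hdt : dist (((mrow:ℝ)/N, t) : ℝ × ℝ) (((mrow:ℝ)/N, (j:ℝ)/N) : ℝ × ℝ) ≤ 1/(N:ℝ) := by
        rw [Prod.dist_eq]
        apply max_le
        · rw [dist_self]; positivity
        · rw [Real.dist_eq, abs_of_nonneg (by linarith [ht.1])]
          have : ((j:ℝ)+1)/N - (j:ℝ)/N = 1/N := by ring
          linarith [ht.2]
      have := hdist _ ⟨hsrow, ht01⟩ _ ⟨hsrow, hfrac j hj.le⟩ hdt
      rw [Metric.mem_ball]
      show dist (H ((mrow:ℝ)/N, t)) (H ((mrow:ℝ)/N, (j:ℝ)/N)) < ε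
      linarith
    rw [loop_poly h hΩ hloop.1 hloop.2.1 hN hU, hDdef]
    apply Finset.sum_congr rfl
    intro j hj
    rw [Finset.mem_range] at hj
    have e0 : P mrow j = γ ((j:ℝ)/N) := hHrow _ (hfrac j hj.le)
    have e1 : P mrow (j+1) = γ (((j:ℝ)+1)/N) := by
      have : ((((j+1)):ℕ):ℝ)/N = ((j:ℝ)+1)/N := by push_cast; ring
      rw [hPdef]
      show H (_, ((((j+1)):ℕ):ℝ)/N) = _
      rw [this]
      exact hHrow _ ⟨by positivity, by
        rw [div_le_one hNR]
        have h2 : ((j:ℝ)+1) = (((j+1):ℕ):ℝ) := by push_cast; ring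
        rw [h2]; exact_mod_cast hj⟩
    rw [e0, e1]
  have hend0 := hend γ₀ 0 h₀ (Nat.zero_le N) (by
    intro t ht
    rw [show ((0:ℕ):ℝ)/N = (0:ℝ) by simp]
    exact H0 t ht)
  have hend1 := hend γ₁ N h₁ le_rfl (by
    intro t ht
    rw [show ((N:ℕ):ℝ)/N = (1:ℝ) from div_self hNR.ne']
    exact H1 t ht)
  rw [hend0, hend1, hDchain]

theorem integral_deriv_congr (V : E3 → E3) (γ : ℝ → E3) :
    (∫ t in (0:ℝ)..1, ∑ k, V (γ t) k * deriv γ t k)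
      = ∫ t in (0:ℝ)..1, ∑ k, V (γ t) k * derivWithin γ (Icc 0 1) t k := by
  apply intervalIntegral.integral_congr_ae
  have h1 : ∀ᵐ t : ℝ ∂volume, t ≠ (1:ℝ) := by
    refine (MeasureTheory.ae_iff).2 ?_
    have e : {a : ℝ | ¬ a ≠ 1} = {1} := by ext a; simp
    rw [e]; exact Real.volume_singleton
  filter_upwards [h1] with t ht htI
  rw [uIoc_of_le zero_le_one] at htI
  have hnh : Icc (0:ℝ) 1 ∈ nhds t := Icc_mem_nhds (lt_of_lt_of_le htI.1 le_rfl)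
    (lt_of_le_of_ne htI.2 ht)
  rw [derivWithin_of_mem_nhds hnh]

end Wein

/-- The loop integral of a C¹ solution `F` of the Pfaffian system of a C² positive-definite
symmetric field `C` on an open `Ω ⊆ ℝ³` depends only on the free homotopy class of the
C¹ loop in `Ω`. -/

theorem weingarten_stmt13 (Ω : Set E3) (hΩ : IsOpen Ω)
    (C : E3 → Matrix (Fin 3) (Fin 3) ℝ)
    (hCreg : ∀ a b, ContDiffOn ℝ 2 (fun x => C x a b) Ω)
    (hpos : ∀ x ∈ Ω, (C x).PosDef)
    (hsym : ∀ x ∈ Ω, (C x).IsSymm)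
    (F : E3 → Matrix (Fin 3) (Fin 3) ℝ)
    (hFreg : ∀ i a, ContDiffOn ℝ 1 (fun x => F x i a) Ω)
    (hF : SolvesPfaffian C F Ω)
    (γ₀ γ₁ : ℝ → E3) (h₀ : IsC1LoopIn γ₀ Ω) (h₁ : IsC1LoopIn γ₁ Ω)
    (hhom : FreelyHomotopicIn γ₀ γ₁ Ω) :
    ∀ i : Fin 3,
      (∫ t in (0:ℝ)..1, ∑ k, F (γ₀ t) i k * deriv γ₀ t k) =
      (∫ t in (0:ℝ)..1, ∑ k, F (γ₁ t) i k * deriv γ₁ t k) := by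
  intro i
  have hchr : ∀ x ∈ Ω, ∀ ρ α β : Fin 3, christoffel C ρ α β x = christoffel C ρ β α x := by
    intro x hx ρ α β
    unfold christoffel
    congr 1
    apply Finset.sum_congr rfl
    intro μ _
    have hev : (fun y => C y α β) =ᶠ[nhds x] (fun y => C y β α) := by
      filter_upwards [hΩ.mem_nhds hx] with y hy
      exact ((hsym y hy).apply α β).symm
    have hpd : pd μ (fun y => C y α β) x = pd μ (fun y => C y β α) x := by
      unfold pd
      rw [hev.fderiv_eq]
    rw [hpd]
    ring
  set V : E3 → E3 := fun x k => F x i k with hVdef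
  have hcl : Wein.Closed1 Ω V := by
    constructor
    · intro k; exact hFreg i k
    · intro x hx j k
      have h1 := hF x hx i k j
      have h2 := hF x hx i j k
      show pd j (fun y => F y i k) x = pd k (fun y => F y i j) x
      rw [h1, h2]
      apply Finset.sum_congr rfl
      intro ρ _
      rw [hchr x hx ρ k j]
  have e₀ := Wein.integral_deriv_congr V γ₀
  have e₁ := Wein.integral_deriv_congr V γ₁
  show (∫ t in (0:ℝ)..1, ∑ k, V (γ₀ t) k * deriv γ₀ t k)
      = ∫ t in (0:ℝ)..1, ∑ k, V (γ₁ t) k * deriv γ₁ t k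
  rw [e₀, e₁]
  exact Wein.closed1_homotopy_invariant hcl hΩ h₀ h₁ hhom
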